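/- Let p ∈ (0, 1/2). Then the function (r, θ, z) ↦ (r·|z|⁻¹·θ⁻²)ᵖ · r is integrable over the region {(r,θ,z) : 0 ≤ r ≤ 1, |z| ≤ r, −π < θ ≤ π, θ ≠ 0, z ≠ 0}, but for p = 1/2 it is not integrable over this region. -/

import Mathlib

open Real MeasureTheory
open scoped ENNReal

/-- The region `{0 ≤ r ≤ 1, |z| ≤ r, −π < θ ≤ π, θ ≠ 0, z ≠ 0}` in `(r,θ,z)`-space. -/
def bingRegion : Set (ℝ × ℝ × ℝ) :=
  {x | 0 ≤ x.1 ∧ x.1 ≤ 1 ∧ |x.2.2| ≤ x.1 ∧ -π < x.2.1 ∧ x.2.1 ≤ π ∧ x.2.1 ≠ 0 ∧ x.2.2 ≠ 0}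

open Set in
lemma aux_abs_rpow_integrable {s a : ℝ} (hs : -1 < s) (ha : 0 ≤ a) :
    IntegrableOn (fun x : ℝ => |x| ^ s) (Set.Icc (-a) a) volume := by
  have h1 : IntervalIntegrable (fun x : ℝ => |x| ^ s) volume 0 a := by
    have h0 := intervalIntegral.intervalIntegrable_rpow' (a := 0) (b := a) hs
    rw [intervalIntegrable_iff, uIoc_of_le ha] at h0 ⊢
    exact h0.congr_fun (fun x hx => by rw [abs_of_pos hx.1]) measurableSet_Ioc
  have h2 : IntervalIntegrable (fun x : ℝ => |x| ^ s) volume (-a) 0 := by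
    have h3 := (IntervalIntegrable.iff_comp_neg (f := fun x : ℝ => |x| ^ s) (by simp)).mp h1
    simp only [abs_neg, neg_zero] at h3
    exact h3.symm
  have h3 := h2.trans h1
  rw [intervalIntegrable_iff, uIoc_of_le (by linarith : -a ≤ a)] at h3
  exact h3.congr_set_ae Ioc_ae_eq_Icc.symm

lemma aux_measurable (q : ℝ) :
    Measurable (fun x : ℝ × ℝ × ℝ => (x.1 * |x.2.2|⁻¹ * (x.2.1 ^ 2)⁻¹) ^ q * x.1) :=
  (((measurable_fst.mul measurable_snd.snd.abs.inv).mul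
    ((measurable_snd.fst.pow_const 2).inv)).pow_const q).mul measurable_fst

lemma aux_bing_measurable : MeasurableSet bingRegion := by
  have h1 : Measurable fun x : ℝ × ℝ × ℝ => x.1 := measurable_fst
  have h2 : Measurable fun x : ℝ × ℝ × ℝ => x.2.1 := measurable_snd.fst
  have h3 : Measurable fun x : ℝ × ℝ × ℝ => x.2.2 := measurable_snd.snd
  exact MeasurableSet.inter (measurableSet_le measurable_const h1) <|
    MeasurableSet.inter (measurableSet_le h1 measurable_const) <|
    MeasurableSet.inter (measurableSet_le h3.abs h1) <|
    MeasurableSet.inter (measurableSet_lt measurable_const h2) <|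
    MeasurableSet.inter (measurableSet_le h2 measurable_const) <|
    MeasurableSet.inter ((h2 (measurableSet_singleton 0)).compl)
      ((h3 (measurableSet_singleton 0)).compl)

open Set in
/-- For `0 < p < 1/2` the function `(r,θ,z) ↦ (r·|z|⁻¹·θ⁻²)ᵖ·r` is integrable over
`bingRegion`, but for `p = 1/2` it is not. -/
theorem bing_distortion_integrability (p : ℝ) (hp0 : 0 < p) (hp : p < 1 / 2) :
    IntegrableOn (fun x : ℝ × ℝ × ℝ => (x.1 * |x.2.2|⁻¹ * (x.2.1 ^ 2)⁻¹) ^ p * x.1)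
        bingRegion volume ∧
      ¬ IntegrableOn (fun x : ℝ × ℝ × ℝ =>
          (x.1 * |x.2.2|⁻¹ * (x.2.1 ^ 2)⁻¹) ^ ((1 : ℝ) / 2) * x.1) bingRegion volume := by
  constructor
  · -- integrability for p < 1/2
    set g : ℝ × ℝ × ℝ → ℝ := fun x =>
      (Icc (0:ℝ) 1).indicator (fun _ => (1:ℝ)) x.1 *
        ((Icc (-π) π).indicator (fun θ => |θ| ^ (-(2*p))) x.2.1 *
          (Icc (-1:ℝ) 1).indicator (fun z => |z| ^ (-p)) x.2.2) with hgdef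
    have hg1 : Integrable ((Icc (0:ℝ) 1).indicator (fun _ => (1:ℝ))) volume := by
      rw [integrable_indicator_iff measurableSet_Icc]
      exact integrableOn_const measure_Icc_lt_top.ne
    have hg2 : Integrable ((Icc (-π) π).indicator (fun θ => |θ| ^ (-(2*p)))) volume := by
      rw [integrable_indicator_iff measurableSet_Icc]
      exact aux_abs_rpow_integrable (by linarith) pi_pos.le
    have hg3 : Integrable ((Icc (-1:ℝ) 1).indicator (fun z => |z| ^ (-p))) volume := by
      rw [integrable_indicator_iff measurableSet_Icc]
      exact aux_abs_rpow_integrable (by linarith) zero_le_one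
    have h23 : Integrable (fun y : ℝ × ℝ =>
        (Icc (-π) π).indicator (fun θ => |θ| ^ (-(2*p))) y.1 *
          (Icc (-1:ℝ) 1).indicator (fun z => |z| ^ (-p)) y.2) volume := by
      rw [Measure.volume_eq_prod]; exact hg2.mul_prod hg3
    have hgint : Integrable g volume := by
      rw [hgdef, Measure.volume_eq_prod]; exact hg1.mul_prod h23
    refine Integrable.mono hgint.restrict
      ((aux_measurable p).aestronglyMeasurable.restrict) ?_
    rw [ae_restrict_iff' aux_bing_measurable]
    refine ae_of_all _ (fun x hx => ?_)
    obtain ⟨h0r, hr1, hzr, hth1, hth2, hth0, hz0⟩ := hx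
    have hzIcc : x.2.2 ∈ Icc (-1:ℝ) 1 := abs_le.mp (hzr.trans hr1)
    have hthIcc : x.2.1 ∈ Icc (-π) π := ⟨hth1.le, hth2⟩
    have hrIcc : x.1 ∈ Icc (0:ℝ) 1 := ⟨h0r, hr1⟩
    have hgx : g x = |x.2.1| ^ (-(2*p)) * |x.2.2| ^ (-p) := by
      rw [hgdef]
      simp only [Set.indicator_of_mem hzIcc, Set.indicator_of_mem hthIcc,
        Set.indicator_of_mem hrIcc, one_mul]
    have hA : (0:ℝ) ≤ |x.2.2| ^ (-p) := Real.rpow_nonneg (abs_nonneg _) _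
    have hB : (0:ℝ) ≤ |x.2.1| ^ (-(2*p)) := Real.rpow_nonneg (abs_nonneg _) _
    have hbase : (0:ℝ) ≤ x.1 * |x.2.2|⁻¹ * (x.2.1 ^ 2)⁻¹ :=
      mul_nonneg (mul_nonneg h0r (inv_nonneg.2 (abs_nonneg _))) (inv_nonneg.2 (sq_nonneg _))
    have hfnn : (0:ℝ) ≤ (x.1 * |x.2.2|⁻¹ * (x.2.1 ^ 2)⁻¹) ^ p * x.1 :=
      mul_nonneg (Real.rpow_nonneg hbase _) h0r
    have e1 : (x.1 * |x.2.2|⁻¹ * (x.2.1 ^ 2)⁻¹) ^ p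
        = x.1 ^ p * |x.2.2| ^ (-p) * |x.2.1| ^ (-(2*p)) := by
      rw [Real.mul_rpow (mul_nonneg h0r (inv_nonneg.2 (abs_nonneg _)))
        (inv_nonneg.2 (sq_nonneg _)),
        Real.mul_rpow h0r (inv_nonneg.2 (abs_nonneg _)),
        Real.inv_rpow (abs_nonneg _), ← Real.rpow_neg (abs_nonneg _),
        Real.inv_rpow (sq_nonneg _), ← Real.rpow_neg (sq_nonneg _),
        ← sq_abs, ← Real.rpow_natCast |x.2.1| 2, ← Real.rpow_mul (abs_nonneg _)]
      norm_num
    have hrp1 : x.1 ^ p ≤ 1 := Real.rpow_le_one h0r hr1 hp0.le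
    have hfle : (x.1 * |x.2.2|⁻¹ * (x.2.1 ^ 2)⁻¹) ^ p * x.1 ≤ g x := by
      rw [e1, hgx]
      have hrp0 : (0:ℝ) ≤ x.1 ^ p := Real.rpow_nonneg h0r _
      nlinarith [mul_nonneg hA hB, mul_le_one₀ hrp1 h0r hr1,
        mul_nonneg (mul_nonneg hrp0 hA) hB]
    rw [Real.norm_eq_abs, Real.norm_eq_abs, abs_of_nonneg hfnn]
    exact hfle.trans (le_abs_self _)
  · -- non-integrability for p = 1/2
    intro hInt
    set F : ℝ × ℝ × ℝ → ℝ :=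
      fun x => (x.1 * |x.2.2|⁻¹ * (x.2.1 ^ 2)⁻¹) ^ ((1 : ℝ) / 2) * x.1 with hFdef
    set S : Set (ℝ × ℝ × ℝ) := Icc (1/2:ℝ) 1 ×ˢ (Ioc (0:ℝ) π ×ˢ Icc (1/4:ℝ) (1/2))
      with hSdef
    have hSsub : S ⊆ bingRegion := by
      rintro ⟨r, θ, z⟩ ⟨⟨hr1, hr2⟩, ⟨hθ1, hθ2⟩, hz1, hz2⟩
      have hπ := pi_pos
      refine ⟨by linarith, hr2, ?_, by linarith, hθ2, ne_of_gt hθ1,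
        ne_of_gt (by linarith : (0:ℝ) < z)⟩
      rw [abs_of_nonneg (by linarith : (0:ℝ) ≤ z)]; linarith
    have hSm : MeasurableSet S :=
      measurableSet_Icc.prod (measurableSet_Ioc.prod measurableSet_Icc)
    have h2 : IntegrableOn F S volume := hInt.mono_set hSsub
    have hfin := h2.2
    unfold HasFiniteIntegral at hfin
    set G : ℝ → ℝ≥0∞ := fun θ => ENNReal.ofReal ((1/2) * θ⁻¹) with hGdef
    have hGm : Measurable G :=
      ENNReal.measurable_ofReal.comp (measurable_const.mul measurable_inv)
    -- pointwise lower bound on S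
    have hbound : ∀ x ∈ S, G x.2.1 ≤ (‖F x‖₊ : ℝ≥0∞) := by
      rintro ⟨r, θ, z⟩ ⟨⟨hr1, hr2⟩, ⟨hθ1, hθ2⟩, hz1, hz2⟩
      have hzpos : (0:ℝ) < z := by linarith
      have hzinv : (2:ℝ) ≤ z⁻¹ := by
        rw [← one_div]; exact (le_div_iff₀ hzpos).2 (by linarith)
      have habs : |z| = z := abs_of_pos hzpos
      have hbase : (θ⁻¹)^2 ≤ r * |z|⁻¹ * (θ^2)⁻¹ := by
        have h1 : (1:ℝ) ≤ r * |z|⁻¹ := by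
          rw [habs]; nlinarith
        have h2 : (0:ℝ) ≤ (θ^2)⁻¹ := inv_nonneg.2 (sq_nonneg _)
        calc (θ⁻¹)^2 = 1 * (θ^2)⁻¹ := by rw [one_mul, inv_pow]
          _ ≤ r * |z|⁻¹ * (θ^2)⁻¹ := mul_le_mul_of_nonneg_right h1 h2
      have hstep : θ⁻¹ ≤ (r * |z|⁻¹ * (θ^2)⁻¹) ^ ((1:ℝ)/2) := by
        have := Real.rpow_le_rpow (sq_nonneg θ⁻¹) hbase (by norm_num : (0:ℝ) ≤ 1/2)
        rwa [← Real.sqrt_eq_rpow, Real.sqrt_sq (inv_nonneg.2 hθ1.le)] at this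
      have hFge : (1/2:ℝ) * θ⁻¹ ≤ F ⟨r, θ, z⟩ := by
        have h3 : (0:ℝ) ≤ θ⁻¹ := inv_nonneg.2 hθ1.le
        calc (1/2:ℝ) * θ⁻¹ = θ⁻¹ * (1/2) := by ring
          _ ≤ (r * |z|⁻¹ * (θ^2)⁻¹) ^ ((1:ℝ)/2) * r := by
              apply mul_le_mul hstep hr1 (by norm_num) (le_trans h3 hstep)
      calc G θ ≤ ENNReal.ofReal ‖F (r, θ, z)‖ := by
            rw [hGdef]
            exact ENNReal.ofReal_le_ofReal
              (le_trans hFge (by rw [Real.norm_eq_abs]; exact le_abs_self _))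
        _ = (‖F (r, θ, z)‖₊ : ℝ≥0∞) := by rw [ofReal_norm]; rfl
    -- the lintegral of G over S is infinite
    have htop : ∫⁻ θ in Ioc (0:ℝ) π, G θ = ⊤ := by
      by_contra hne
      have hfin2 : IntegrableOn (fun θ : ℝ => (1/2:ℝ) * θ⁻¹) (Ioo 0 π) volume := by
        refine ⟨(measurable_const.mul measurable_inv).aestronglyMeasurable, ?_⟩
        unfold HasFiniteIntegral
        calc ∫⁻ θ in Ioo (0:ℝ) π, (‖(1/2:ℝ) * θ⁻¹‖₊ : ℝ≥0∞)
            = ∫⁻ θ in Ioo (0:ℝ) π, G θ := by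
              refine setLIntegral_congr_fun measurableSet_Ioo (fun θ hθ => ?_)
              simp only [hGdef]
              exact Real.enorm_eq_ofReal (mul_nonneg (by norm_num) (inv_nonneg.2 hθ.1.le))
          _ ≤ ∫⁻ θ in Ioc (0:ℝ) π, G θ := lintegral_mono_set Ioo_subset_Ioc_self
          _ < ⊤ := lt_top_iff_ne_top.2 hne
      have h9 : IntegrableOn (fun θ : ℝ => θ ^ (-1:ℝ)) (Ioo 0 π) volume := by
        refine IntegrableOn.congr_fun (hfin2.const_mul 2) (fun θ hθ => ?_) measurableSet_Ioo
        rw [Real.rpow_neg_one]; ring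
      rw [intervalIntegral.integrableOn_Ioo_rpow_iff pi_pos] at h9
      linarith
    have hrestr : volume.restrict S
        = (volume.restrict (Icc (1/2:ℝ) 1)).prod
            ((volume.restrict (Ioc (0:ℝ) π)).prod (volume.restrict (Icc (1/4:ℝ) (1/2)))) := by
      rw [Measure.prod_restrict, Measure.prod_restrict, ← Measure.volume_eq_prod, ← Measure.volume_eq_prod]
    have hkey : ∫⁻ x in S, G x.2.1 = ⊤ := by
      rw [hrestr]
      have hinner : ∫⁻ y : ℝ × ℝ, G y.1
          ∂((volume.restrict (Ioc (0:ℝ) π)).prod (volume.restrict (Icc (1/4:ℝ) (1/2)))) = ⊤ := by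
        have := lintegral_prod_mul (μ := volume.restrict (Ioc (0:ℝ) π))
          (ν := volume.restrict (Icc (1/4:ℝ) (1/2)))
          hGm.aemeasurable (aemeasurable_const (b := (1:ℝ≥0∞)))
        simp only [mul_one] at this
        rw [this, htop, lintegral_one, Measure.restrict_apply_univ, Real.volume_Icc]
        rw [ENNReal.top_mul (by norm_num : ENNReal.ofReal (1/2 - 1/4) ≠ 0)]
      have houter := lintegral_prod_mul (μ := volume.restrict (Icc (1/2:ℝ) 1))
        (ν := (volume.restrict (Ioc (0:ℝ) π)).prod (volume.restrict (Icc (1/4:ℝ) (1/2))))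
        (aemeasurable_const (b := (1:ℝ≥0∞))) (hGm.comp measurable_fst).aemeasurable
      simp only [one_mul, Function.comp] at houter
      rw [houter, hinner, lintegral_one, Measure.restrict_apply_univ, Real.volume_Icc]
      rw [ENNReal.mul_top (by norm_num : ENNReal.ofReal (1 - 1/2) ≠ 0)]
    have : (⊤ : ℝ≥0∞) ≤ ∫⁻ x in S, (‖F x‖₊ : ℝ≥0∞) := by
      rw [← hkey]
      refine lintegral_mono_ae ?_
      rw [ae_restrict_iff' hSm]
      exact ae_of_all _ hbound
    exact absurd (lt_of_le_of_lt this hfin) (lt_irrefl _)
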